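/- (Maximally Short codes) For any positive integers B ≤ T, there exist a finite field F, a (k,n) streaming encoder with k = T and n = T+B (hence of rate T/(T+B)), and a delay-T decoder that together correct every erasure pattern in which, within every window of T+1 consecutive time indices, the erased indices are contained in a single interval of at most B consecutive integers. This rate meets the Martinian–Sundberg bound B = T(1−R)/R with equality. -/

import Mathlib

open scoped Classical

/-- A `(k,n)` streaming encoder over `F`: at each time `i` it maps the source symbols
`s[0], …, s[i]` to a channel symbol in `Fⁿ`. -/
def Encoder (F : Type) (k n : ℕ) : Type :=
  (i : ℕ) → (Fin (i + 1) → (Fin k → F)) → (Fin n → F)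

/-- The channel input `x[i]` produced by the encoder `f` from the source sequence `s`. -/
def chInput {F : Type} {k n : ℕ} (f : Encoder F k n) (s : ℕ → Fin k → F) (i : ℕ) :
    Fin n → F :=
  f i (fun t => s t)

/-- The channel output under erasure pattern `E`: `none` (the erasure symbol `⋆`) at erased
positions, `some x[i]` otherwise. -/
noncomputable def chOutput {F : Type} {k n : ℕ} (f : Encoder F k n) (E : Set ℕ)
    (s : ℕ → Fin k → F) (i : ℕ) : Option (Fin n → F) :=
  if i ∈ E then none else some (chInput f s i)

/-- A delay-`T` decoder family: at time `i + T` it maps `y[0], …, y[i+T]` to a source symbol. -/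
def Decoder (F : Type) (k n T : ℕ) : Type :=
  (i : ℕ) → (Fin (i + T + 1) → Option (Fin n → F)) → (Fin k → F)

/-- The code `(f, g)` corrects the erasure pattern `E` with delay `T`: for every source
sequence, each `s[i]` is reproduced from `y[0], …, y[i+T]`. -/
def Corrects {F : Type} {k n T : ℕ} (f : Encoder F k n) (g : Decoder F k n T)
    (E : Set ℕ) : Prop :=
  ∀ (s : ℕ → Fin k → F) (i : ℕ), g i (fun t => chOutput f E s t) = s i

/-- The burst-erasure channel: in every window of `T + 1` consecutive indices, the erased
indices are contained in a single interval of at most `B` consecutive integers. -/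
def BurstChannel (B T : ℕ) : Set (Set ℕ) :=
  {E | ∀ j : ℕ, ∃ b : ℕ, E ∩ Set.Icc j (j + T) ⊆ Set.Ico b (b + B)}

namespace MSAux

variable (p B T : ℕ)

/-- distinct nonzero field elements used as Vandermonde nodes -/
def xv (σ : Fin B) : ZMod p := ((σ.val + 1 : ℕ) : ZMod p)

lemma hcoordH (ℓ : Fin (T / B)) (σ : Fin B) : T % B + ℓ.val * B + σ.val < T := by
  have h1 : (ℓ.val + 1) * B ≤ T / B * B := Nat.mul_le_mul_right B ℓ.isLt
  have h2 : T / B * B + T % B = T := Nat.div_add_mod' T B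
  have h3 := σ.isLt
  rw [Nat.succ_mul] at h1
  omega

lemma hcoordL (μ : Fin (T % B)) : μ.val < T :=
  lt_of_lt_of_le μ.isLt (Nat.mod_le T B)

/-- the parity functional: value of parity coordinate `σ` at time `t` -/
def par (u : ℕ → Fin T → ZMod p) (t : ℕ) (σ : Fin B) : ZMod p :=
  (∑ ℓ : Fin (T / B),
      if T - ℓ.val * B ≤ t then
        u (t - (T - ℓ.val * B)) ⟨T % B + ℓ.val * B + σ.val, hcoordH B T ℓ σ⟩ else 0)
  + ∑ μ : Fin (T % B),
      xv p B σ ^ μ.val *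
        (if B + μ.val - σ.val ≤ t then u (t - (B + μ.val - σ.val)) ⟨μ.val, hcoordL B T μ⟩ else 0)

/-- the encoder: systematic part plus parity part -/
def enc : Encoder (ZMod p) T (T + B) := fun i hist ν =>
  if hv : ν.val < T then hist (Fin.last i) ⟨ν.val, hv⟩
  else
    par p B T (fun t μ => if ht : t ≤ i then hist ⟨t, Nat.lt_succ_of_le ht⟩ μ else 0) i
      ⟨ν.val - T, by have := ν.isLt; omega⟩

lemma par_congr (u u' : ℕ → Fin T → ZMod p) (t : ℕ) (σ : Fin B)
    (h : ∀ t' ≤ t, u t' = u' t') : par p B T u t σ = par p B T u' t σ := by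
  unfold par
  congr 1
  · refine Finset.sum_congr rfl fun ℓ _ => ?_
    split
    · rw [h _ (Nat.sub_le _ _)]
    · rfl
  · refine Finset.sum_congr rfl fun μ _ => ?_
    congr 1
    split
    · rw [h _ (Nat.sub_le _ _)]
    · rfl

lemma chInput_lt (s : ℕ → Fin T → ZMod p) (i : ℕ) (ν : Fin (T + B)) (hv : ν.val < T) :
    chInput (enc p B T) s i ν = s i ⟨ν.val, hv⟩ := by
  simp only [chInput, enc, hv, dif_pos]
  rfl

lemma chInput_ge (s : ℕ → Fin T → ZMod p) (i : ℕ) (ν : Fin (T + B)) (hv : ¬ ν.val < T)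
    (hlt : ν.val - T < B) :
    chInput (enc p B T) s i ν = par p B T s i ⟨ν.val - T, hlt⟩ := by
  simp only [chInput, enc, hv, dif_neg, not_false_iff]
  apply par_congr
  intro t' ht'
  funext μ
  simp [ht']

lemma par_sub (u u' : ℕ → Fin T → ZMod p) (t : ℕ) (σ : Fin B) :
    par p B T (fun m μ => u m μ - u' m μ) t σ = par p B T u t σ - par p B T u' t σ := by
  unfold par
  have e1 : (∑ ℓ : Fin (T / B),
      if T - ℓ.val * B ≤ t then
        (u (t - (T - ℓ.val * B)) ⟨T % B + ℓ.val * B + σ.val, hcoordH B T ℓ σ⟩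
          - u' (t - (T - ℓ.val * B)) ⟨T % B + ℓ.val * B + σ.val, hcoordH B T ℓ σ⟩) else 0)
      = (∑ ℓ : Fin (T / B),
          if T - ℓ.val * B ≤ t then
            u (t - (T - ℓ.val * B)) ⟨T % B + ℓ.val * B + σ.val, hcoordH B T ℓ σ⟩ else 0)
        - (∑ ℓ : Fin (T / B),
          if T - ℓ.val * B ≤ t then
            u' (t - (T - ℓ.val * B)) ⟨T % B + ℓ.val * B + σ.val, hcoordH B T ℓ σ⟩ else 0) := by
    rw [← Finset.sum_sub_distrib]
    exact Finset.sum_congr rfl fun ℓ _ => by split <;> simp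
  have e2 : (∑ μ : Fin (T % B),
      xv p B σ ^ μ.val *
        (if B + μ.val - σ.val ≤ t then
          (u (t - (B + μ.val - σ.val)) ⟨μ.val, hcoordL B T μ⟩
            - u' (t - (B + μ.val - σ.val)) ⟨μ.val, hcoordL B T μ⟩) else 0))
      = (∑ μ : Fin (T % B),
          xv p B σ ^ μ.val *
            (if B + μ.val - σ.val ≤ t then u (t - (B + μ.val - σ.val)) ⟨μ.val, hcoordL B T μ⟩ else 0))
        - (∑ μ : Fin (T % B),
          xv p B σ ^ μ.val *
            (if B + μ.val - σ.val ≤ t then u' (t - (B + μ.val - σ.val)) ⟨μ.val, hcoordL B T μ⟩ else 0)) := by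
    rw [← Finset.sum_sub_distrib]
    exact Finset.sum_congr rfl fun μ _ => by split <;> simp [mul_sub]
  rw [e1, e2]
  ring


section Star

variable [Fact (Nat.Prime p)]

lemma xv_ne_zero (hpB : B < p) (σ : Fin B) : xv p B σ ≠ 0 := by
  haveI : NeZero p := ⟨by omega⟩
  intro h0
  have hval : ((σ.val + 1 : ℕ) : ZMod p).val = σ.val + 1 :=
    ZMod.val_cast_of_lt (by have := σ.isLt; omega)
  rw [xv] at h0
  rw [h0] at hval
  simp at hval

lemma xv_inj (hpB : B < p) (σ1 σ2 : Fin B) (h : xv p B σ1 = xv p B σ2) : σ1 = σ2 := by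
  haveI : NeZero p := ⟨by omega⟩
  have h1 : ((σ1.val + 1 : ℕ) : ZMod p).val = σ1.val + 1 :=
    ZMod.val_cast_of_lt (by have := σ1.isLt; omega)
  have h2 : ((σ2.val + 1 : ℕ) : ZMod p).val = σ2.val + 1 :=
    ZMod.val_cast_of_lt (by have := σ2.isLt; omega)
  rw [xv, xv] at h
  rw [h] at h1
  rw [h2] at h1
  exact Fin.ext (by omega)

lemma starL (hB : 0 < B) (hBT : B ≤ T) (hpB : B < p)
    (u : ℕ → Fin T → ZMod p)
    (hu : ∀ m, B ≤ m → m ≤ T → ∀ μ, u m μ = 0)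
    (heq : ∀ τ, B ≤ τ → τ ≤ T → ∀ σ : Fin B, par p B T u τ σ = 0) :
    ∀ m μc (_ : m < B) (_ : μc < T % B) (h : μc < T), u m ⟨μc, h⟩ = 0 := by
  haveI : NeZero p := ⟨by omega⟩
  have hdm : T / B * B + T % B = T := Nat.div_add_mod' T B
  have hq1 : 1 ≤ T / B := (Nat.one_le_div_iff hB).mpr hBT
  have hq1' : 1 * B ≤ T / B * B := Nat.mul_le_mul_right B hq1
  rw [one_mul] at hq1'
  intro m μc hm hμc hμT
  set a := m + μc with ha
  set lo := a + 1 - B with hlo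
  set hi := min a (T % B - 1) with hhi
  set lo' := a + 1 - (T % B) with hlo'
  set hi' := min a (B - 1) with hhi'
  set n := hi + 1 - lo with hn
  have hrpos : 0 < T % B := by omega
  have hfacts : lo ≤ μc ∧ μc ≤ hi ∧ hi < T % B ∧ hi' < B ∧ lo' + n = hi' + 1 ∧
      lo + n = hi + 1 ∧ a ≤ T ∧ 0 < n := by
    refine ⟨by omega, by omega, by omega, by omega, by omega, by omega, by omega, by omega⟩
  set yy : ℕ → ZMod p := fun ν => if hν : ν < T then u (a - ν) ⟨ν, hν⟩ else 0 with hyy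
  have eqn : ∀ i : Fin n,
      ∑ k ∈ Finset.range n, xv p B ⟨lo' + i.val, by have := i.isLt; omega⟩ ^ (lo + k)
        * yy (lo + k) = 0 := by
    intro i
    have hiB : lo' + i.val < B := by have := i.isLt; omega
    have hia : lo' + i.val ≤ a := by have := i.isLt; omega
    set σv := lo' + i.val with hσv
    set τ := B + (a - σv) with hτ
    have hvalmk : ((⟨σv, hiB⟩ : Fin B) : ℕ) = σv := rfl
    have hBτ : B ≤ τ := by omega
    have hτT : τ ≤ T := by omega
    have H0 := heq τ hBτ hτT ⟨σv, hiB⟩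
    unfold par at H0
    have hH : (∑ ℓ : Fin (T / B),
        if T - ℓ.val * B ≤ τ then
          u (τ - (T - ℓ.val * B))
            ⟨T % B + ℓ.val * B + (⟨σv, hiB⟩ : Fin B).val, hcoordH B T ℓ ⟨σv, hiB⟩⟩
        else 0) = 0 := by
      refine Finset.sum_eq_zero fun ℓ _ => ?_
      have h1 : (ℓ.val + 1) * B ≤ T / B * B := Nat.mul_le_mul_right B ℓ.isLt
      rw [Nat.succ_mul] at h1
      rw [if_neg (by omega)]
    rw [hH, zero_add] at H0
    have H3 : ∑ μ' ∈ Finset.Icc lo hi, xv p B ⟨σv, hiB⟩ ^ μ' * yy μ' = 0 := by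
      have hIcc : Finset.Icc lo hi
          = (Finset.range (T % B)).filter (fun μ' => lo ≤ μ' ∧ μ' ≤ hi) := by
        ext x
        simp only [Finset.mem_Icc, Finset.mem_filter, Finset.mem_range]
        omega
      rw [hIcc, Finset.sum_filter, ← Fin.sum_univ_eq_sum_range
        (fun μ' => if lo ≤ μ' ∧ μ' ≤ hi then xv p B ⟨σv, hiB⟩ ^ μ' * yy μ' else 0) (T % B)]
      refine Eq.trans (Finset.sum_congr rfl fun μ' _ => ?_) H0
      have hνT : μ'.val < T := lt_of_lt_of_le μ'.isLt (Nat.mod_le T B)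
      by_cases hc : μ'.val ≤ a
      · have hguard : B + μ'.val - ((⟨σv, hiB⟩ : Fin B) : ℕ) ≤ τ := by
          rw [hvalmk]; omega
        have hidx : τ - (B + μ'.val - ((⟨σv, hiB⟩ : Fin B) : ℕ)) = a - μ'.val := by
          rw [hvalmk]; omega
        rw [if_pos hguard, hidx]
        by_cases hlo2 : lo ≤ μ'.val
        · have hhi2 : μ'.val ≤ hi := by have := μ'.isLt; omega
          rw [if_pos (And.intro hlo2 hhi2)]
          simp only [hyy]
          rw [dif_pos hνT]
        · rw [if_neg (fun hcon => hlo2 hcon.1)]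
          have hBm : B ≤ a - μ'.val := by omega
          rw [hu (a - μ'.val) hBm (by omega), mul_zero]
      · have hguard : ¬ (B + μ'.val - ((⟨σv, hiB⟩ : Fin B) : ℕ) ≤ τ) := by
          rw [hvalmk]; omega
        rw [if_neg hguard, mul_zero, if_neg (fun hcon => hc (by omega))]
    rw [← Finset.Ico_add_one_right_eq_Icc, Finset.sum_Ico_eq_sum_range] at H3
    exact H3
  -- Vandermonde step
  set vσ : Fin n → Fin B := fun i => ⟨lo' + i.val, by have := i.isLt; omega⟩ with hvσ
  set v : Fin n → ZMod p := fun i => xv p B (vσ i) with hv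
  set M : Matrix (Fin n) (Fin n) (ZMod p) := Matrix.of (fun i k => v i ^ (lo + k.val)) with hM
  set Y : Fin n → ZMod p := fun k => yy (lo + k.val) with hY
  have hMY : M.mulVec Y = 0 := by
    funext i
    have h := eqn i
    rw [← Fin.sum_univ_eq_sum_range
      (fun k => xv p B ⟨lo' + i.val, by have := i.isLt; omega⟩ ^ (lo + k) * yy (lo + k)) n] at h
    simpa [M, Y, v, vσ, Matrix.mulVec, dotProduct] using h
  have hdet : M.det ≠ 0 := by
    have hform : M = Matrix.of (fun i k => (v i ^ lo) * Matrix.vandermonde v i k) := by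
      ext i k
      simp [M, Matrix.vandermonde, pow_add]
    rw [hform, Matrix.det_mul_column]
    refine mul_ne_zero (Finset.prod_ne_zero_iff.mpr fun i _ =>
      pow_ne_zero _ (xv_ne_zero p B hpB (vσ i))) ?_
    rw [Matrix.det_vandermonde_ne_zero_iff]
    intro i j hij
    have := xv_inj p B hpB (vσ i) (vσ j) hij
    have hval : lo' + i.val = lo' + j.val := congrArg Fin.val this
    exact Fin.ext (by omega)
  have hY0 : Y = 0 := Matrix.eq_zero_of_mulVec_eq_zero hdet hMY
  have hfin := congrFun hY0 ⟨μc - lo, by omega⟩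
  simp only [hY, Pi.zero_apply] at hfin
  have hidx2 : lo + (μc - lo) = μc := by omega
  rw [hidx2] at hfin
  simp only [hyy, hμT, dif_pos] at hfin
  have hma : a - μc = m := by omega
  rw [hma] at hfin
  exact hfin

lemma star (hB : 0 < B) (hBT : B ≤ T) (hpB : B < p)
    (u : ℕ → Fin T → ZMod p)
    (hu : ∀ m, B ≤ m → m ≤ T → ∀ μ, u m μ = 0)
    (heq : ∀ τ, B ≤ τ → τ ≤ T → ∀ σ : Fin B, par p B T u τ σ = 0) :
    ∀ μ, u 0 μ = 0 := by
  have hdm : T / B * B + T % B = T := Nat.div_add_mod' T B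
  have hq1 : 1 ≤ T / B := (Nat.one_le_div_iff hB).mpr hBT
  have hq1' : 1 * B ≤ T / B * B := Nat.mul_le_mul_right B hq1
  rw [one_mul] at hq1'
  intro μ
  by_cases hμr : μ.val < T % B
  · exact starL p B T hB hBT hpB u hu heq 0 μ.val hB hμr μ.isLt
  · push_neg at hμr
    set ℓv := (μ.val - T % B) / B with hℓv
    set σv := (μ.val - T % B) % B with hσv
    have hσB : σv < B := Nat.mod_lt _ hB
    have hdm2 : ℓv * B + σv = μ.val - T % B := Nat.div_add_mod' _ B
    have hℓq : ℓv < T / B := by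
      have h3 := μ.isLt
      by_contra hcon
      push_neg at hcon
      have h4 : T / B * B ≤ ℓv * B := Nat.mul_le_mul_right B hcon
      omega
    set τ := T - ℓv * B with hτ
    have hmul : (ℓv + 1) * B ≤ T / B * B := Nat.mul_le_mul_right B hℓq
    rw [Nat.succ_mul] at hmul
    have hBτ : B ≤ τ := by omega
    have hτT : τ ≤ T := by omega
    have H0 := heq τ hBτ hτT ⟨σv, hσB⟩
    unfold par at H0
    have hvalmk : ((⟨σv, hσB⟩ : Fin B) : ℕ) = σv := rfl
    have hL : (∑ μ' : Fin (T % B),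
        xv p B ⟨σv, hσB⟩ ^ μ'.val *
          (if B + μ'.val - (⟨σv, hσB⟩ : Fin B).val ≤ τ then
            u (τ - (B + μ'.val - (⟨σv, hσB⟩ : Fin B).val)) ⟨μ'.val, hcoordL B T μ'⟩
          else 0)) = 0 := by
      refine Finset.sum_eq_zero fun μ' _ => ?_
      by_cases hg : B + μ'.val - ((⟨σv, hσB⟩ : Fin B) : ℕ) ≤ τ
      · rw [if_pos hg]
        set m' := τ - (B + μ'.val - ((⟨σv, hσB⟩ : Fin B) : ℕ)) with hm'
        by_cases hmB : m' < B
        · rw [starL p B T hB hBT hpB u hu heq m' μ'.val hmB μ'.isLt (hcoordL B T μ'),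
            mul_zero]
        · rw [hu m' (by omega) (by omega), mul_zero]
      · rw [if_neg hg, mul_zero]
    have hfirst : (∑ ℓ : Fin (T / B),
        if T - ℓ.val * B ≤ τ then
          u (τ - (T - ℓ.val * B))
            ⟨T % B + ℓ.val * B + (⟨σv, hσB⟩ : Fin B).val, hcoordH B T ℓ ⟨σv, hσB⟩⟩
        else 0) = u 0 μ := by
      have hsingle := Fintype.sum_eq_single (⟨ℓv, hℓq⟩ : Fin (T / B))
        (f := fun ℓ : Fin (T / B) =>
          if T - ℓ.val * B ≤ τ then
            u (τ - (T - ℓ.val * B))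
              ⟨T % B + ℓ.val * B + (⟨σv, hσB⟩ : Fin B).val, hcoordH B T ℓ ⟨σv, hσB⟩⟩
          else 0)
        (fun ℓ' hne => ?_)
      · rw [hsingle]
        beta_reduce
        simp only [Fin.val_mk]
        rw [if_pos (show T - ℓv * B ≤ τ by omega)]
        have h0 : τ - (T - ℓv * B) = 0 := by omega
        rw [h0]
        congr 1
        exact Fin.ext (by simp only [Fin.val_mk]; omega)
      · beta_reduce
        by_cases hg : T - ℓ'.val * B ≤ τ
        · rw [if_pos hg]
          rcases lt_trichotomy ℓ'.val ℓv with h | h | h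
          · exfalso
            have h5 : (ℓ'.val + 1) * B ≤ ℓv * B := Nat.mul_le_mul_right B h
            rw [Nat.succ_mul] at h5
            omega
          · exact absurd (Fin.ext h) hne
          · have h5 : (ℓv + 1) * B ≤ ℓ'.val * B := Nat.mul_le_mul_right B h
            rw [Nat.succ_mul] at h5
            have h6 : (ℓ'.val + 1) * B ≤ T / B * B := Nat.mul_le_mul_right B ℓ'.isLt
            rw [Nat.succ_mul] at h6
            exact hu _ (by omega) (by omega) _
        · rw [if_neg hg]
    rw [hfirst, hL, add_zero] at H0
    exact H0

lemma par_shift (d : ℕ → Fin T → ZMod p) (j τ : ℕ)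
    (hdlt : ∀ t, t < j → ∀ μ, d t μ = 0) (σ : Fin B) :
    par p B T (fun m μ => d (j + m) μ) τ σ = par p B T d (j + τ) σ := by
  have hdm : T / B * B + T % B = T := Nat.div_add_mod' T B
  unfold par
  beta_reduce
  congr 1
  · refine Finset.sum_congr rfl fun ℓ _ => ?_
    have h1' : (ℓ.val + 1) * B ≤ T / B * B := Nat.mul_le_mul_right B ℓ.isLt
    rw [Nat.succ_mul] at h1'
    by_cases hg : T - ℓ.val * B ≤ τ
    · rw [if_pos hg, if_pos (by omega)]
      have hidx : j + (τ - (T - ℓ.val * B)) = j + τ - (T - ℓ.val * B) := by omega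
      rw [hidx]
    · rw [if_neg hg]
      by_cases hg2 : T - ℓ.val * B ≤ j + τ
      · rw [if_pos hg2]
        exact (hdlt (j + τ - (T - ℓ.val * B)) (by omega) _).symm
      · rw [if_neg hg2]
  · refine Finset.sum_congr rfl fun μ' _ => ?_
    congr 1
    have hσ := σ.isLt
    by_cases hg : B + μ'.val - σ.val ≤ τ
    · rw [if_pos hg, if_pos (by omega)]
      have hidx : j + (τ - (B + μ'.val - σ.val)) = j + τ - (B + μ'.val - σ.val) := by omega
      rw [hidx]
    · rw [if_neg hg]
      by_cases hg2 : B + μ'.val - σ.val ≤ j + τ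
      · rw [if_pos hg2]
        exact (hdlt (j + τ - (B + μ'.val - σ.val)) (by omega) _).symm
      · rw [if_neg hg2]

lemma key (hB : 0 < B) (hBT : B ≤ T) (hpB : B < p)
    (E : Set ℕ) (hE : E ∈ BurstChannel B T) (s s' : ℕ → Fin T → ZMod p) (i : ℕ)
    (hmatch : ∀ t, t ≤ i + T → t ∉ E →
      chInput (enc p B T) s' t = chInput (enc p B T) s t) :
    ∀ j, j ≤ i → s' j = s j := by
  have hsys : ∀ t, t ≤ i + T → t ∉ E → s' t = s t := by
    intro t ht htE
    funext μf
    have hlt : μf.val < T + B := by have := μf.isLt; omega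
    have h := congrFun (hmatch t ht htE) ⟨μf.val, hlt⟩
    have e1 := chInput_lt p B T s' t ⟨μf.val, hlt⟩ μf.isLt
    have e2 := chInput_lt p B T s t ⟨μf.val, hlt⟩ μf.isLt
    rw [e1, e2] at h
    exact h
  have hpar : ∀ t, t ≤ i + T → t ∉ E → ∀ σ : Fin B,
      par p B T s' t σ = par p B T s t σ := by
    intro t ht htE σ
    have hlt : T + σ.val < T + B := by have := σ.isLt; omega
    have h := congrFun (hmatch t ht htE) ⟨T + σ.val, hlt⟩
    have hge : ¬ ((⟨T + σ.val, hlt⟩ : Fin (T + B)).val < T) := by simp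
    have hsub : (⟨T + σ.val, hlt⟩ : Fin (T + B)).val - T < B := by
      simp only [Fin.val_mk]
      have := σ.isLt
      omega
    rw [chInput_ge p B T s' t _ hge hsub, chInput_ge p B T s t _ hge hsub] at h
    have hfx : (⟨(⟨T + σ.val, hlt⟩ : Fin (T + B)).val - T, hsub⟩ : Fin B) = σ :=
      Fin.ext (by simp only [Fin.val_mk]; omega)
    rw [hfx] at h
    exact h
  intro j
  induction j using Nat.strong_induction_on with
  | _ j IH =>
  intro hji
  by_cases hjE : j ∈ E
  · obtain ⟨b, hb⟩ := hE j
    have hjb : j ∈ Set.Ico b (b + B) := hb ⟨hjE, by simp only [Set.mem_Icc]; omega⟩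
    simp only [Set.mem_Ico] at hjb
    have hdlt : ∀ t, t < j → ∀ μ, s' t μ - s t μ = 0 := by
      intro t htj μ
      rw [IH t htj (by omega), sub_self]
    have hnoE : ∀ t, b + B ≤ t → t ≤ j + T → t ∉ E := by
      intro t h1 h2 htE
      have h3 := hb ⟨htE, by simp only [Set.mem_Icc]; omega⟩
      simp only [Set.mem_Ico] at h3
      omega
    have hu : ∀ m, B ≤ m → m ≤ T → ∀ μ,
        (fun m μ => s' (j + m) μ - s (j + m) μ) m μ = 0 := by
      intro m h1 h2 μ
      show s' (j + m) μ - s (j + m) μ = 0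
      rw [hsys (j + m) (by omega) (hnoE (j + m) (by omega) (by omega)), sub_self]
    have hueq : ∀ τ, B ≤ τ → τ ≤ T → ∀ σ : Fin B,
        par p B T (fun m μ => s' (j + m) μ - s (j + m) μ) τ σ = 0 := by
      intro τ h1 h2 σ
      have h3 := par_shift p B T (fun t μ => s' t μ - s t μ) j τ hdlt σ
      have h4 : par p B T (fun t μ => s' t μ - s t μ) (j + τ) σ = 0 := by
        rw [par_sub p B T s' s (j + τ) σ,
          hpar (j + τ) (by omega) (hnoE (j + τ) (by omega) (by omega)) σ, sub_self]
      exact h3.trans h4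
    have hfin := star p B T hB hBT hpB (fun m μ => s' (j + m) μ - s (j + m) μ) hu hueq
    funext μ
    have h5 : s' (j + 0) μ - s (j + 0) μ = 0 := hfin μ
    rw [Nat.add_zero] at h5
    exact sub_eq_zero.mp h5
  · exact hsys j (by omega) hjE


noncomputable def dec : Decoder (ZMod p) T (T + B) T := fun i y =>
  if h : ∃ s' : ℕ → Fin T → ZMod p,
      ∀ t : Fin (i + T + 1), ∀ v : Fin (T + B) → ZMod p,
        y t = some v → chInput (enc p B T) s' t.val = v
  then h.choose i else fun _ => 0

end Star

end MSAux

/-- Maximally Short codes: for `B ≤ T` there is a streaming code with `k = T`, `n = T + B`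
(rate `T/(T+B)`) and delay `T` that corrects every single-burst pattern of burst length at
most `B` per window of length `T+1`; this rate meets the Martinian–Sundberg bound
`B = T(1−R)/R` with equality. -/
theorem stmt4 (B T : ℕ) (hB : 0 < B) (hBT : B ≤ T) :
    ∃ (F : Type) (_ : Field F) (_ : Fintype F)
      (f : Encoder F T (T + B)) (g : Decoder F T (T + B) T),
      (∀ E ∈ BurstChannel B T, Corrects f g E) ∧
      (B : ℝ) = T * (1 - (T : ℝ) / (T + B)) / ((T : ℝ) / (T + B)) := by
  obtain ⟨p, hple, hp⟩ := Nat.exists_infinite_primes (B + 1)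
  haveI : Fact p.Prime := ⟨hp⟩
  have hpB : B < p := by omega
  refine ⟨ZMod p, inferInstance, inferInstance, MSAux.enc p B T, MSAux.dec p B T, ?_, ?_⟩
  · intro E hE s i
    show MSAux.dec p B T i (fun t => chOutput (MSAux.enc p B T) E s t.val) = s i
    unfold MSAux.dec
    split
    next h =>
      have hmatch : ∀ t, t ≤ i + T → t ∉ E →
          chInput (MSAux.enc p B T) h.choose t = chInput (MSAux.enc p B T) s t := by
        intro t ht htE
        refine h.choose_spec ⟨t, by omega⟩ (chInput (MSAux.enc p B T) s t) ?_
        show chOutput (MSAux.enc p B T) E s t = some (chInput (MSAux.enc p B T) s t)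
        unfold chOutput
        rw [if_neg htE]
      exact MSAux.key p B T hB hBT hpB E hE s h.choose i hmatch i le_rfl
    next h =>
      exfalso
      refine h ⟨s, fun t v hv => ?_⟩
      unfold chOutput at hv
      beta_reduce at hv
      by_cases htE : t.val ∈ E
      · rw [if_pos htE] at hv
        exact absurd hv (by simp)
      · rw [if_neg htE] at hv
        exact Option.some_inj.mp hv
  · have hT0 : (0 : ℝ) < (T : ℝ) := by
      have h1 : 0 < T := by omega
      exact_mod_cast h1
    have hB0 : (0 : ℝ) < (B : ℝ) := by exact_mod_cast hB
    have hTB : (T : ℝ) + (B : ℝ) ≠ 0 := by positivity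
    field_simp
    ring
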